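/- Let G be a symmetric n×n real matrix and A, B, C, D diagonal n×n real matrices with A·D − B·C = 1 (the identity matrix). Let U be a diagonal n×n real matrix and assume that 1 − U·G, C·U + D, and A + B·G are invertible. Set Ũ = (A·U + B)·(C·U + D)⁻¹ and G̃ = (C + D·G)·(A + B·G)⁻¹, and assume 1 − Ũ·G̃ is invertible. Then (C·U + D)·G·(1 − U·G)⁻¹·(C·U + D) + C·(C·U + D) = G̃·(1 − Ũ·G̃)⁻¹. In other words, the fractional linear symmetry transformation maps the solution of the basic system with initial data G to the solution with initial data G̃ = (C + D·G)·(A + B·G)⁻¹. -/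
import Mathlib


private lemma diag_comm {n : ℕ} {X Y : Matrix (Fin n) (Fin n) ℝ}
    (hX : X.IsDiag) (hY : Y.IsDiag) : X * Y = Y * X := by
  rw [← hX.diagonal_diag, ← hY.diagonal_diag, Matrix.diagonal_mul_diagonal,
    Matrix.diagonal_mul_diagonal]
  simp [mul_comm]

private lemma diag_mul {n : ℕ} {X Y : Matrix (Fin n) (Fin n) ℝ}
    (hX : X.IsDiag) (hY : Y.IsDiag) : (X * Y).IsDiag := by
  rw [← hX.diagonal_diag, ← hY.diagonal_diag, Matrix.diagonal_mul_diagonal]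
  exact Matrix.isDiag_diagonal _

/-- Let `G` be symmetric, `A, B, C, D` diagonal with `A D - B C = 1`,
`U` diagonal, and assume `1 - U G`, `C U + D`, `A + B G` invertible.  With
`Ũ = (A U + B)(C U + D)⁻¹` and `G̃ = (C + D G)(A + B G)⁻¹`, and `1 - Ũ G̃`
invertible, the fractional linear symmetry transformation maps the solution of
the basic system with initial data `G` to the one with initial data `G̃`:
`(C U + D) Γ (C U + D) + C (C U + D) = G̃ (1 - Ũ G̃)⁻¹` where `Γ = G (1 - U G)⁻¹`. -/
theorem stmt5 {n : ℕ} (G A B C D U : Matrix (Fin n) (Fin n) ℝ)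
    (hG : G.IsSymm) (hA : A.IsDiag) (hB : B.IsDiag) (hC : C.IsDiag) (hD : D.IsDiag)
    (hU : U.IsDiag)
    (hABCD : A * D - B * C = 1)
    (h1 : IsUnit (1 - U * G)) (h2 : IsUnit (C * U + D)) (h3 : IsUnit (A + B * G))
    (Ut Gt : Matrix (Fin n) (Fin n) ℝ)
    (hUt : Ut = (A * U + B) * (C * U + D)⁻¹)
    (hGt : Gt = (C + D * G) * (A + B * G)⁻¹)
    (h4 : IsUnit (1 - Ut * Gt)) :
    (C * U + D) * (G * (1 - U * G)⁻¹) * (C * U + D) + C * (C * U + D)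
      = Gt * (1 - Ut * Gt)⁻¹ := by
  set M := C * U + D with hM
  set N := A + B * G with hN
  have d1 : IsUnit (1 - U * G).det := (Matrix.isUnit_iff_isUnit_det _).mp h1
  have d2 : IsUnit M.det := (Matrix.isUnit_iff_isUnit_det _).mp h2
  have d3 : IsUnit N.det := (Matrix.isUnit_iff_isUnit_det _).mp h3
  -- commutation facts for diagonal matrices
  have hCUA : C * U * A = A * U * C := by
    rw [diag_comm hC hU, mul_assoc, diag_comm hC hA, ← mul_assoc, diag_comm hU hA]
  have hCUB : C * U * B = U * (B * C) := by
    rw [diag_comm hC hU, mul_assoc, diag_comm hC hB]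
  have hAUD : A * U * D = U * (A * D) := by
    rw [diag_comm hA hU, mul_assoc]
  -- the key determinant-one identity
  have key : M * N - (A * U + B) * (C + D * G) = 1 - U * G := by
    have expand : M * N - (A * U + B) * (C + D * G)
        = (D * A - B * C) + (C * U * A - A * U * C)
          + (C * U * B - A * U * D) * G + (D * B - B * D) * G := by
      rw [hM, hN]; noncomm_ring
    have hsub : C * U * B - A * U * D = -U := by
      rw [hCUB, hAUD, ← neg_sub, ← mul_sub, hABCD, mul_one]
    rw [expand, hCUA, hsub, diag_comm hD hA, diag_comm hD hB, hABCD]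
    noncomm_ring
  -- (A U + B) commutes with M⁻¹
  have hMdiag : M.IsDiag := (diag_mul hC hU).add hD
  have hAUBdiag : (A * U + B).IsDiag := (diag_mul hA hU).add hB
  have hcommM : (A * U + B) * M = M * (A * U + B) := diag_comm hAUBdiag hMdiag
  have hcommMinv : (A * U + B) * M⁻¹ = M⁻¹ * (A * U + B) := by
    calc (A * U + B) * M⁻¹ = M⁻¹ * (M * (A * U + B)) * M⁻¹ := by
          rw [← mul_assoc, Matrix.nonsing_inv_mul M d2, one_mul]
      _ = M⁻¹ * ((A * U + B) * M) * M⁻¹ := by rw [hcommM]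
      _ = M⁻¹ * (A * U + B) := by
          rw [mul_assoc, mul_assoc, Matrix.mul_nonsing_inv M d2, mul_one]
  -- 1 - Ũ G̃ = M⁻¹ (1 - U G) N⁻¹
  have key2 : 1 - Ut * Gt = M⁻¹ * (1 - U * G) * N⁻¹ := by
    have e1 : M⁻¹ * (M * N) * N⁻¹ = 1 := by
      rw [← mul_assoc, Matrix.nonsing_inv_mul M d2, one_mul, Matrix.mul_nonsing_inv N d3]
    have e2 : Ut * Gt = M⁻¹ * ((A * U + B) * (C + D * G)) * N⁻¹ := by
      rw [hUt, hGt, hcommMinv]; noncomm_ring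
    rw [e2, ← key, mul_sub, sub_mul, e1]
  have key3 : (1 - Ut * Gt)⁻¹ = N * (1 - U * G)⁻¹ * M := by
    rw [key2, Matrix.mul_inv_rev, Matrix.mul_inv_rev,
      Matrix.nonsing_inv_nonsing_inv M d2, Matrix.nonsing_inv_nonsing_inv N d3, ← mul_assoc]
  -- pull everything together
  have hfac : M * G * (1 - U * G)⁻¹ + C = (C + D * G) * (1 - U * G)⁻¹ := by
    have hMG : M * G + C * (1 - U * G) = C + D * G := by rw [hM]; noncomm_ring
    calc M * G * (1 - U * G)⁻¹ + C
        = (M * G + C * (1 - U * G)) * (1 - U * G)⁻¹ := by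
          rw [add_mul (M * G) (C * (1 - U * G)) (1 - U * G)⁻¹,
            mul_assoc C (1 - U * G) (1 - U * G)⁻¹, Matrix.mul_nonsing_inv _ d1, mul_one]
      _ = (C + D * G) * (1 - U * G)⁻¹ := by rw [hMG]
  calc M * (G * (1 - U * G)⁻¹) * M + C * M
      = (M * G * (1 - U * G)⁻¹ + C) * M := by noncomm_ring
    _ = (C + D * G) * (1 - U * G)⁻¹ * M := by rw [hfac]
    _ = Gt * (1 - Ut * Gt)⁻¹ := by
        rw [key3, hGt]
        have e3 : (C + D * G) * N⁻¹ * (N * (1 - U * G)⁻¹ * M)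
            = (C + D * G) * (N⁻¹ * N) * ((1 - U * G)⁻¹ * M) := by noncomm_ring
        rw [e3, Matrix.nonsing_inv_mul N d3, mul_one, ← mul_assoc]
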